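/- For integers $1 \le j \le n$, $\sum_{i=j}^{n-1} \binom{i-1}{j-1}\binom{n}{i-1} + \binom{n-1}{j-1}\frac{n-j}{n+1-j}\binom{n}{n-1} = \binom{n}{j-1}\left(2^{n-j+1} - 2\right)$. -/

import Mathlib

open Finset

/-- the identity used to compute `q_j' p^{[0]}` for RLS on
the Deceptive problem. -/
theorem stmt_17 (n j : ℕ) (hj : 1 ≤ j) (hjn : j ≤ n) :
    ∑ i ∈ Finset.Icc j (n - 1), ((i - 1).choose (j - 1) : ℝ) * (n.choose (i - 1))
        + ((n - 1).choose (j - 1) : ℝ) * (((n : ℝ) - j) / ((n : ℝ) + 1 - j))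
            * (n.choose (n - 1))
      = (n.choose (j - 1) : ℝ) * (2 ^ (n - j + 1) - 2) := by
  have hn : 1 ≤ n := hj.trans hjn
  set m := n - j with hm
  -- nat sum identity
  have hIcc : Finset.Icc j (n - 1) = Finset.Ico j n := by
    rw [← Finset.Ico_add_one_right_eq_Icc]
    congr 1
    omega
  have hpt : ∀ k ∈ Finset.range m,
      ((j + k) - 1).choose (j - 1) * n.choose ((j + k) - 1)
        = n.choose (j - 1) * (m + 1).choose k := by
    intro k hk
    rw [Finset.mem_range] at hk
    have h1 : j - 1 ≤ j + k - 1 := by omega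
    have h2 : j + k - 1 ≤ n := by omega
    have := Nat.choose_mul (n := n) h1
    rw [mul_comm]
    rw [this]
    congr 2 <;> omega
  have hsum : ∑ i ∈ Finset.Icc j (n - 1), (i - 1).choose (j - 1) * n.choose (i - 1)
      = n.choose (j - 1) * ∑ k ∈ Finset.range m, (m + 1).choose k := by
    rw [hIcc, Finset.sum_Ico_eq_sum_range]
    rw [Finset.mul_sum]
    have : n - j = m := rfl
    rw [this]
    exact Finset.sum_congr rfl hpt
  -- partial binomial sum
  have hbin : (∑ k ∈ Finset.range m, (m + 1).choose k) + (m + 2) = 2 ^ (m + 1) := by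
    have h := Nat.sum_range_choose (m + 1)
    rw [show m + 1 + 1 = m + 2 from rfl, Finset.sum_range_succ, Finset.sum_range_succ] at h
    simp [Nat.choose_succ_self_right] at h
    omega
  -- second term identity in ℕ
  have habs : (n - 1).choose (j - 1) * n = n.choose (j - 1) * (m + 1) := by
    have := Nat.choose_mul_succ_eq (n - 1) (j - 1)
    rw [show n - 1 + 1 = n by omega] at this
    rw [this]
    congr 1
    omega
  -- casts
  have hden : (n : ℝ) + 1 - j = ((m + 1 : ℕ) : ℝ) := by
    push_cast
    have : (m : ℝ) = (n : ℝ) - j := by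
      rw [hm, Nat.cast_sub hjn]
    rw [this]; ring
  have hnum : (n : ℝ) - j = (m : ℕ) := by
    rw [hm, Nat.cast_sub hjn]
  have hchn : (n.choose (n - 1) : ℝ) = n := by
    have : n.choose (n - 1) = n := by
      rw [Nat.choose_symm hn, Nat.choose_one_right]
    exact_mod_cast congrArg (Nat.cast : ℕ → ℝ) this
  have hsecond : ((n - 1).choose (j - 1) : ℝ) * (((n : ℝ) - j) / ((n : ℝ) + 1 - j))
      * (n.choose (n - 1)) = (n.choose (j - 1) : ℝ) * m := by
    rw [hchn, hnum, hden]
    have habsR : ((n - 1).choose (j - 1) : ℝ) * n = (n.choose (j - 1) : ℝ) * (m + 1) := by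
      exact_mod_cast congrArg (Nat.cast : ℕ → ℝ) habs
    have hne : ((m + 1 : ℕ) : ℝ) ≠ 0 := by positivity
    field_simp
    push_cast at habsR ⊢
    nlinarith [habsR]
  have hsumR : ∑ i ∈ Finset.Icc j (n - 1), ((i - 1).choose (j - 1) : ℝ) * (n.choose (i - 1))
      = (n.choose (j - 1) : ℝ) * (2 ^ (m + 1) - (m + 2)) := by
    have := congrArg (Nat.cast : ℕ → ℝ) hsum
    push_cast at this
    rw [this]
    have := congrArg (Nat.cast : ℕ → ℝ) hbin
    push_cast at this
    ring_nf
    ring_nf at this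
    nlinarith [this]
  rw [hsumR, hsecond]
  ring
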